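/- arXiv:2106.05072 — 3 statements merged into one kernel-verified Lean document; each statement's English description precedes it below -/
import Mathlib

section
/- Let A be a nilpotent 2n×2n complex matrix belonging to Ω_{2n}. Then for every integer k ≥ 1, the number rank(A^{k−1}) + rank(A^{k+1}) − 2·rank(A^k) (which equals the number of Jordan blocks of size k in the Jordan normal form of A) is even; that is, each number in the Segre characteristic of A occurs an even number of times. -/
open Matrix

noncomputable section

/-- The `k×k` upper-triangular Jordan block with eigenvalue `lam`. -/
def jordanBlock {R : Type*} [Zero R] [One R] (lam : R) (k : ℕ) : Matrix (Fin k) (Fin k) R :=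
  Matrix.of fun i j => if (i : ℕ) = (j : ℕ) then lam else if (i : ℕ) + 1 = (j : ℕ) then 1 else 0

/-- The `k×k` sip matrix: ones on the main anti-diagonal, zeros elsewhere. -/
def sip (R : Type*) [Zero R] [One R] (k : ℕ) : Matrix (Fin k) (Fin k) R :=
  Matrix.of fun i j => if (i : ℕ) + (j : ℕ) = k - 1 then 1 else 0

/-- The order-preserving identification of `Fin k ⊕ Fin k` with `Fin (2*k)`. -/
def finTwoMul (k : ℕ) : (Fin k ⊕ Fin k) ≃ Fin (2 * k) :=
  finSumFinEquiv.trans (finCongr (two_mul k).symm)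

/-- Block-diagonal direct sum `M ⊕ N` of two `k×k` matrices, as a `(2k)×(2k)` matrix. -/
def dsum2 {R : Type*} [Zero R] {k : ℕ} (M N : Matrix (Fin k) (Fin k) R) :
    Matrix (Fin (2 * k)) (Fin (2 * k)) R :=
  Matrix.reindex (finTwoMul k) (finTwoMul k) (Matrix.fromBlocks M 0 0 N)

/-- The `2n×2n` complex matrix `[[A₁, conj A₂], [−A₂, conj A₁]]`. -/
def omegaMap {n : ℕ} (A₁ A₂ : Matrix (Fin n) (Fin n) ℂ) :
    Matrix (Fin (2 * n)) (Fin (2 * n)) ℂ :=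
  Matrix.reindex (finTwoMul n) (finTwoMul n)
    (Matrix.fromBlocks A₁ (A₂.map (starRingEnd ℂ)) (-A₂) (A₁.map (starRingEnd ℂ)))

/-- Membership in the real subalgebra `Ω_{2n}` of `2n×2n` complex matrices. -/
def InOmega {n : ℕ} (M : Matrix (Fin (2 * n)) (Fin (2 * n)) ℂ) : Prop :=
  ∃ A₁ A₂ : Matrix (Fin n) (Fin n) ℂ, M = omegaMap A₁ A₂

namespace SegreAux

local notation "ℍ" => Quaternion ℝ

/-- A complex vector space with an antilinear map squaring to `-1` has even dimension. -/
lemma even_finrank_of_conjlinear (V : Type) [AddCommGroup V] [Module ℂ V] [Module ℝ V]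
    [IsScalarTower ℝ ℂ V] [FiniteDimensional ℂ V] (J : V → V)
    (hadd : ∀ x y, J (x + y) = J x + J y)
    (hsm : ∀ (c : ℂ) (x : V), J (c • x) = (starRingEnd ℂ) c • J x)
    (hJJ : ∀ x, J (J x) = -x) :
    Even (Module.finrank ℂ V) := by
  classical
  set a : ℍ → ℂ := fun q => ⟨q.re, q.imI⟩ with ha
  set b : ℍ → ℂ := fun q => ⟨q.imJ, q.imK⟩ with hb
  have ha_mul : ∀ q r : ℍ, a (q * r) = a q * a r - b q * (starRingEnd ℂ) (b r) := by
    intro q r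
    apply Complex.ext <;>
      simp [ha, hb, Complex.mul_re, Complex.mul_im, Quaternion.re_mul, Quaternion.imI_mul] <;>
      ring
  have hb_mul : ∀ q r : ℍ, b (q * r) = a q * b r + b q * (starRingEnd ℂ) (a r) := by
    intro q r
    apply Complex.ext <;>
      simp [ha, hb, Complex.mul_re, Complex.mul_im, Quaternion.imJ_mul, Quaternion.imK_mul] <;>
      ring
  letI : SMul ℍ V := ⟨fun q x => a q • x + b q • J x⟩
  have hsmul_def : ∀ (q : ℍ) (x : V), q • x = a q • x + b q • J x := fun _ _ => rfl
  letI : Module ℍ V := Module.ofMinimalAxioms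
    (fun q x y => by
      simp only [hsmul_def, hadd, smul_add]; abel)
    (fun q r x => by
      have haa : a (q + r) = a q + a r := by apply Complex.ext <;> simp [ha]
      have hbb : b (q + r) = b q + b r := by apply Complex.ext <;> simp [hb]
      simp only [hsmul_def, haa, hbb, add_smul]; abel)
    (fun q r x => by
      simp only [hsmul_def, hadd, hsm, hJJ, smul_add, smul_smul, smul_neg,
        ha_mul, hb_mul, sub_smul, add_smul]
      abel)
    (fun x => by
      have h1 : a 1 = 1 := by apply Complex.ext <;> simp [ha, Quaternion.re_one, Quaternion.imI_one]
      have h0 : b 1 = 0 := by apply Complex.ext <;> simp [hb, Quaternion.imJ_one, Quaternion.imK_one]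
      simp [hsmul_def, h1, h0])
  letI : IsScalarTower ℝ ℍ V := ⟨fun r q x => by
    have haa : a (r • q) = (r : ℂ) * a q := by apply Complex.ext <;> simp [ha]
    have hbb : b (r • q) = (r : ℂ) * b q := by apply Complex.ext <;> simp [hb]
    simp only [hsmul_def, haa, hbb, smul_add]
    congr 1 <;> rw [← smul_smul] <;> exact algebraMap_smul ℂ r _⟩
  haveI : FiniteDimensional ℝ V := Module.Finite.trans (R := ℝ) ℂ V
  have e1 : Module.finrank ℝ ℂ * Module.finrank ℂ V = Module.finrank ℝ V :=
    Module.finrank_mul_finrank ℝ ℂ V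
  have e2 : Module.finrank ℝ ℍ * Module.finrank ℍ V = Module.finrank ℝ V :=
    Module.finrank_mul_finrank ℝ ℍ V
  rw [Complex.finrank_real_complex] at e1
  rw [Quaternion.finrank_eq_four] at e2
  exact ⟨Module.finrank ℍ V, by omega⟩

variable {n : ℕ}

/-- The matrix of the quaternionic structure. -/
def Jmat (n : ℕ) : Matrix (Fin (2 * n)) (Fin (2 * n)) ℂ :=
  Matrix.reindex (finTwoMul n) (finTwoMul n) (Matrix.fromBlocks 0 1 (-1) 0)

lemma Jmat_sq : Jmat n * Jmat n = -1 := by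
  rw [Jmat, Matrix.reindex_apply, Matrix.submatrix_mul_equiv, Matrix.fromBlocks_multiply]
  have : Matrix.fromBlocks (0 * 0 + (1 : Matrix (Fin n) (Fin n) ℂ) * -1) (0 * 1 + 1 * 0)
      (-1 * 0 + 0 * -1) (-1 * 1 + 0 * 0) = (-1 : Matrix (Fin n ⊕ Fin n) (Fin n ⊕ Fin n) ℂ) := by
    simp [← Matrix.fromBlocks_one, Matrix.fromBlocks_neg]
  rw [this]
  simp [Matrix.submatrix_neg, Matrix.submatrix_one_equiv]

lemma Jmat_map : (Jmat n).map (starRingEnd ℂ) = Jmat n := by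
  have h0 : (0 : Matrix (Fin n) (Fin n) ℂ).map (starRingEnd ℂ) = 0 := by
    ext i j; simp
  have h1 : (1 : Matrix (Fin n) (Fin n) ℂ).map (starRingEnd ℂ) = 1 := by
    ext i j; simp [Matrix.one_apply, apply_ite (starRingEnd ℂ)]
  have hm1 : (-1 : Matrix (Fin n) (Fin n) ℂ).map (starRingEnd ℂ) = -1 := by
    ext i j; simp [Matrix.one_apply, apply_ite (starRingEnd ℂ)]
  rw [Jmat, Matrix.reindex_apply, ← Matrix.submatrix_map, Matrix.fromBlocks_map,
    h0, h1, hm1]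

lemma star_mulVec' {m k : ℕ} (M : Matrix (Fin m) (Fin k) ℂ) (v : Fin k → ℂ) :
    star (M.mulVec v) = (M.map (starRingEnd ℂ)).mulVec (star v) := by
  funext i
  simp [Matrix.mulVec, dotProduct, star_sum, Pi.star_apply, map_sum, mul_comm]

lemma comm_of_inOmega {M : Matrix (Fin (2 * n)) (Fin (2 * n)) ℂ} (hM : InOmega M) :
    M * Jmat n = Jmat n * M.map (starRingEnd ℂ) := by
  obtain ⟨A₁, A₂, rfl⟩ := hM
  have hmapmap : ∀ X : Matrix (Fin n) (Fin n) ℂ,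
      (X.map (starRingEnd ℂ)).map (starRingEnd ℂ) = X := by
    intro X; ext i j; simp [Matrix.map_apply]
  have mneg : ∀ X : Matrix (Fin n) (Fin n) ℂ,
      (-X).map (starRingEnd ℂ) = -(X.map (starRingEnd ℂ)) := by
    intro X; ext i j; simp [Matrix.map_apply]
  rw [omegaMap, Jmat]
  simp only [Matrix.reindex_apply, ← Matrix.submatrix_map, Matrix.submatrix_mul_equiv]
  congr 1
  rw [Matrix.fromBlocks_map, Matrix.fromBlocks_multiply, Matrix.fromBlocks_multiply,
    hmapmap, hmapmap, mneg]
  congr 1 <;> simp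

lemma comm_pow {A : Matrix (Fin (2 * n)) (Fin (2 * n)) ℂ} (hA : InOmega A) (m : ℕ) :
    A ^ m * Jmat n = Jmat n * (A ^ m).map (starRingEnd ℂ) := by
  induction m with
  | zero => simp [Matrix.map_one]
  | succ m ih =>
    have hmul : (A ^ m * A).map (starRingEnd ℂ)
        = (A ^ m).map (starRingEnd ℂ) * A.map (starRingEnd ℂ) := Matrix.map_mul
    rw [pow_succ, mul_assoc, comm_of_inOmega hA, ← mul_assoc, ih, mul_assoc, hmul]

lemma even_rank {M : Matrix (Fin (2 * n)) (Fin (2 * n)) ℂ}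
    (hM : M * Jmat n = Jmat n * M.map (starRingEnd ℂ)) : Even M.rank := by
  classical
  set W : Submodule ℂ (Fin (2 * n) → ℂ) := LinearMap.range M.mulVecLin with hW
  have hmem : ∀ x ∈ W, (Jmat n).mulVec (star x) ∈ W := by
    rintro x ⟨v, rfl⟩
    refine ⟨(Jmat n).mulVec (star v), ?_⟩
    simp only [Matrix.mulVecLin_apply]
    rw [star_mulVec', Matrix.mulVec_mulVec, Matrix.mulVec_mulVec, ← hM]
  let J : W → W := fun x => ⟨(Jmat n).mulVec (star (x : Fin (2 * n) → ℂ)), hmem _ x.2⟩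
  have hrank : M.rank = Module.finrank ℂ W := rfl
  rw [hrank]
  refine even_finrank_of_conjlinear W J ?_ ?_ ?_
  · intro x y
    apply Subtype.ext
    simp [J, star_add, Matrix.mulVec_add]
  · intro c x
    apply Subtype.ext
    show Jmat n *ᵥ star ((c • x : W) : Fin (2 * n) → ℂ)
        = (starRingEnd ℂ) c • (Jmat n *ᵥ star (x : Fin (2 * n) → ℂ))
    rw [Submodule.coe_smul, star_smul, Matrix.mulVec_smul]
    rfl
  · intro x
    apply Subtype.ext
    simp only [J]
    rw [star_mulVec', Jmat_map, star_star, Matrix.mulVec_mulVec, Jmat_sq]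
    simp [Matrix.neg_mulVec]

end SegreAux

/-- **Corollary 2.2.** Each number in the Segre characteristic of a nilpotent matrix in
`Ω_{2n}` occurs an even number of times: for every `k ≥ 1`, the number of Jordan blocks
of size `k`, namely `rank(A^(k−1)) + rank(A^(k+1)) − 2·rank(A^k)`, is even. -/
theorem segre_characteristic_even {n : ℕ} (A : Matrix (Fin (2 * n)) (Fin (2 * n)) ℂ)
    (hA : InOmega A) (hnil : IsNilpotent A) (k : ℕ) (hk : 1 ≤ k) :
    Even (((A ^ (k - 1)).rank : ℤ) + ((A ^ (k + 1)).rank : ℤ) - 2 * ((A ^ k).rank : ℤ)) := by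
  obtain ⟨p, hp⟩ := SegreAux.even_rank (SegreAux.comm_pow hA (k - 1))
  obtain ⟨q, hq⟩ := SegreAux.even_rank (SegreAux.comm_pow hA (k + 1))
  exact ⟨(p : ℤ) + q - (A ^ k).rank, by push_cast [hp, hq]; ring⟩

end
end

section
/- Let Q₁, J₁ be n×n complex matrices and Q₂, J₂ be p×p complex matrices such that H₁ := Q₁ ⊕ conj(Q₁) ∈ Ω_{2n} and B₁ := J₁ ⊕ conj(J₁) ∈ Ω_{2n}, with H₁ invertible Hermitian and B₁ H₁-selfadjoint, and H₂ := Q₂ ⊕ conj(Q₂) ∈ Ω_{2p} and B₂ := J₂ ⊕ conj(J₂) ∈ Ω_{2p}, with H₂ invertible Hermitian and B₂ H₂-selfadjoint. Let A₁ = [[A₁₁⁽¹⁾, conj(A₁₂⁽¹⁾)],[−A₁₂⁽¹⁾, conj(A₁₁⁽¹⁾)]] ∈ Ω_{2n} be an H₁-selfadjoint matrix with A₁^m = B₁, and A₂ = [[A₁₁⁽²⁾, conj(A₁₂⁽²⁾)],[−A₁₂⁽²⁾, conj(A₁₁⁽²⁾)]] ∈ Ω_{2p} an H₂-selfadjoint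 matrix with A₂^m = B₂. Set B̂ := J₁ ⊕ J₂ ⊕ conj(J₁) ⊕ conj(J₂), Ĥ := Q₁ ⊕ Q₂ ⊕ conj(Q₁) ⊕ conj(Q₂), and let Â be the 2(n+p)×2(n+p) block matrix with block rows [A₁₁⁽¹⁾, 0, conj(A₁₂⁽¹⁾), 0], [0, A₁₁⁽²⁾, 0, conj(A₁₂⁽²⁾)], [−A₁₂⁽¹⁾, 0, conj(A₁₁⁽¹⁾), 0], [0, −A₁₂⁽²⁾, 0, conj(A₁₁⁽²⁾)]. Then B̂ and Â belong to Ω_{2(n+p)}, B̂ is Ĥ-selfadjoint, Â is Ĥ-selfadjoint, and Â^m = B̂. -/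
open Matrix

noncomputable section

/-- The block-diagonal pair `M ⊕ conj M`, an element of `Ω_{2k}`. -/
def pairConj {k : ℕ} (M : Matrix (Fin k) (Fin k) ℂ) :
    Matrix (Fin (2 * k)) (Fin (2 * k)) ℂ :=
  dsum2 M (M.map (starRingEnd ℂ))

/-- The order-preserving identification of `(Fin n ⊕ Fin p) ⊕ (Fin n ⊕ Fin p)`
with `Fin (2*(n+p))`. -/
def quadEquiv (n p : ℕ) : ((Fin n ⊕ Fin p) ⊕ (Fin n ⊕ Fin p)) ≃ Fin (2 * (n + p)) :=
  (Equiv.sumCongr finSumFinEquiv finSumFinEquiv).trans (finTwoMul (n + p))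

/-- The block-diagonal direct sum `M₁ ⊕ M₂ ⊕ M₃ ⊕ M₄` of blocks of sizes `n, p, n, p`. -/
def ddiag4 {n p : ℕ} (M₁ : Matrix (Fin n) (Fin n) ℂ) (M₂ : Matrix (Fin p) (Fin p) ℂ)
    (M₃ : Matrix (Fin n) (Fin n) ℂ) (M₄ : Matrix (Fin p) (Fin p) ℂ) :
    Matrix (Fin (2 * (n + p))) (Fin (2 * (n + p))) ℂ :=
  Matrix.reindex (quadEquiv n p) (quadEquiv n p)
    (Matrix.fromBlocks (Matrix.fromBlocks M₁ 0 0 M₂) 0 0 (Matrix.fromBlocks M₃ 0 0 M₄))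

/-- The `2(n+p) × 2(n+p)` matrix `Â` with block rows
`[A₁₁⁽¹⁾, 0, conj A₁₂⁽¹⁾, 0]`, `[0, A₁₁⁽²⁾, 0, conj A₁₂⁽²⁾]`,
`[−A₁₂⁽¹⁾, 0, conj A₁₁⁽¹⁾, 0]`, `[0, −A₁₂⁽²⁾, 0, conj A₁₁⁽²⁾]`. -/
def hatA {n p : ℕ} (B₁₁ B₁₂ : Matrix (Fin n) (Fin n) ℂ)
    (C₁₁ C₁₂ : Matrix (Fin p) (Fin p) ℂ) :
    Matrix (Fin (2 * (n + p))) (Fin (2 * (n + p))) ℂ :=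
  Matrix.reindex (quadEquiv n p) (quadEquiv n p)
    (Matrix.fromBlocks
      (Matrix.fromBlocks B₁₁ 0 0 C₁₁)
      (Matrix.fromBlocks (B₁₂.map (starRingEnd ℂ)) 0 0 (C₁₂.map (starRingEnd ℂ)))
      (Matrix.fromBlocks (-B₁₂) 0 0 (-C₁₂))
      (Matrix.fromBlocks (B₁₁.map (starRingEnd ℂ)) 0 0 (C₁₁.map (starRingEnd ℂ))))


namespace BPBR

variable {n p : ℕ}

/-- interleaving equivalence -/
def sg (n p : ℕ) : (Fin n ⊕ Fin n) ⊕ (Fin p ⊕ Fin p) ≃ (Fin n ⊕ Fin p) ⊕ (Fin n ⊕ Fin p) :=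
  Equiv.sumSumSumComm (Fin n) (Fin n) (Fin p) (Fin p)

lemma interleave (A B C D : Matrix (Fin n) (Fin n) ℂ)
    (A' B' C' D' : Matrix (Fin p) (Fin p) ℂ) :
    Matrix.reindex (sg n p) (sg n p)
      (Matrix.fromBlocks (Matrix.fromBlocks A B C D) 0 0 (Matrix.fromBlocks A' B' C' D')) =
    Matrix.fromBlocks (Matrix.fromBlocks A 0 0 A') (Matrix.fromBlocks B 0 0 B')
      (Matrix.fromBlocks C 0 0 C') (Matrix.fromBlocks D 0 0 D') := by
  ext i j
  rcases i with (i | i) | (i | i) <;> rcases j with (j | j) | (j | j) <;>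
    simp [sg, Equiv.sumSumSumComm, Equiv.sumAssoc, Equiv.sumComm, Matrix.fromBlocks]

lemma reindex_mul {m k : Type*} [Fintype m] [Fintype k] [DecidableEq m] [DecidableEq k]
    (e : m ≃ k) (M N : Matrix m m ℂ) :
    Matrix.reindex e e M * Matrix.reindex e e N = Matrix.reindex e e (M * N) := by
  simp [Matrix.reindex_apply, Matrix.submatrix_mul_equiv]

lemma reindex_conjT {m k : Type*} (e : m ≃ k) (M : Matrix m m ℂ) :
    (Matrix.reindex e e M)ᴴ = Matrix.reindex e e Mᴴ := by
  simp [Matrix.reindex_apply, Matrix.conjTranspose_submatrix]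

lemma reindex_pow {m k : Type*} [Fintype m] [Fintype k] [DecidableEq m] [DecidableEq k]
    (e : m ≃ k) (M : Matrix m m ℂ) (r : ℕ) (hr : 0 < r) :
    (Matrix.reindex e e M) ^ r = Matrix.reindex e e (M ^ r) := by
  induction r with
  | zero => omega
  | succ r ih =>
    rcases Nat.eq_zero_or_pos r with h | h
    · subst h; simp
    · rw [pow_succ, pow_succ, ih h, reindex_mul]

lemma fromBlocks_diag_pow {a b : Type*} [Fintype a] [Fintype b] [DecidableEq a] [DecidableEq b]
    (X : Matrix a a ℂ) (Y : Matrix b b ℂ) (r : ℕ) (hr : 0 < r) :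
    (Matrix.fromBlocks X 0 0 Y) ^ r = Matrix.fromBlocks (X ^ r) 0 0 (Y ^ r) := by
  induction r with
  | zero => omega
  | succ r ih =>
    rcases Nat.eq_zero_or_pos r with h | h
    · subst h; simp
    · rw [pow_succ, pow_succ, pow_succ, ih h, Matrix.fromBlocks_multiply]
      simp

lemma reindex_inj {m k : Type*} (e : m ≃ k) {M N : Matrix m m ℂ}
    (h : Matrix.reindex e e M = Matrix.reindex e e N) : M = N := by
  have := congrArg (Matrix.reindex e.symm e.symm) h
  simpa using this

lemma quad_reindex (P : Matrix (Fin n) (Fin n) ℂ) (R : Matrix (Fin p) (Fin p) ℂ)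
    (Q : Matrix (Fin n) (Fin n) ℂ) (T : Matrix (Fin p) (Fin p) ℂ)
    (U : Matrix (Fin n) (Fin n) ℂ) (V : Matrix (Fin p) (Fin p) ℂ)
    (W : Matrix (Fin n) (Fin n) ℂ) (Z : Matrix (Fin p) (Fin p) ℂ) :
    Matrix.reindex (finTwoMul (n + p)) (finTwoMul (n + p))
      (Matrix.fromBlocks
        (Matrix.reindex finSumFinEquiv finSumFinEquiv (Matrix.fromBlocks P 0 0 R))
        (Matrix.reindex finSumFinEquiv finSumFinEquiv (Matrix.fromBlocks Q 0 0 T))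
        (Matrix.reindex finSumFinEquiv finSumFinEquiv (Matrix.fromBlocks U 0 0 V))
        (Matrix.reindex finSumFinEquiv finSumFinEquiv (Matrix.fromBlocks W 0 0 Z))) =
    Matrix.reindex (quadEquiv n p) (quadEquiv n p)
      (Matrix.fromBlocks (Matrix.fromBlocks P 0 0 R) (Matrix.fromBlocks Q 0 0 T)
        (Matrix.fromBlocks U 0 0 V) (Matrix.fromBlocks W 0 0 Z)) := by
  ext i j
  simp only [Matrix.reindex_apply, Matrix.submatrix_apply, quadEquiv, Equiv.symm_trans_apply]
  rcases h1 : (finTwoMul (n+p)).symm i with a | a <;>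
    rcases h2 : (finTwoMul (n+p)).symm j with b | b <;>
      simp [Matrix.fromBlocks, Equiv.sumCongr]

/-- The combining map. -/
def Phi (n p : ℕ) (X : Matrix (Fin n ⊕ Fin n) (Fin n ⊕ Fin n) ℂ)
    (Y : Matrix (Fin p ⊕ Fin p) (Fin p ⊕ Fin p) ℂ) :
    Matrix (Fin (2 * (n + p))) (Fin (2 * (n + p))) ℂ :=
  Matrix.reindex (quadEquiv n p) (quadEquiv n p)
    (Matrix.reindex (sg n p) (sg n p) (Matrix.fromBlocks X 0 0 Y))

lemma Phi_mul (X X' : Matrix (Fin n ⊕ Fin n) (Fin n ⊕ Fin n) ℂ)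
    (Y Y' : Matrix (Fin p ⊕ Fin p) (Fin p ⊕ Fin p) ℂ) :
    Phi n p X Y * Phi n p X' Y' = Phi n p (X * X') (Y * Y') := by
  unfold Phi
  rw [reindex_mul, reindex_mul, Matrix.fromBlocks_multiply]
  simp

lemma Phi_conjT (X : Matrix (Fin n ⊕ Fin n) (Fin n ⊕ Fin n) ℂ)
    (Y : Matrix (Fin p ⊕ Fin p) (Fin p ⊕ Fin p) ℂ) :
    (Phi n p X Y)ᴴ = Phi n p Xᴴ Yᴴ := by
  unfold Phi
  rw [reindex_conjT, reindex_conjT, Matrix.fromBlocks_conjTranspose]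
  simp

lemma Phi_pow (X : Matrix (Fin n ⊕ Fin n) (Fin n ⊕ Fin n) ℂ)
    (Y : Matrix (Fin p ⊕ Fin p) (Fin p ⊕ Fin p) ℂ) (r : ℕ) (hr : 0 < r) :
    (Phi n p X Y) ^ r = Phi n p (X ^ r) (Y ^ r) := by
  unfold Phi
  rw [reindex_pow _ _ r hr, reindex_pow _ _ r hr, fromBlocks_diag_pow _ _ r hr]

lemma ddiag4_eq (M₁ M₃ : Matrix (Fin n) (Fin n) ℂ) (M₂ M₄ : Matrix (Fin p) (Fin p) ℂ) :
    ddiag4 M₁ M₂ M₃ M₄ =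
      Phi n p (Matrix.fromBlocks M₁ 0 0 M₃) (Matrix.fromBlocks M₂ 0 0 M₄) := by
  unfold ddiag4 Phi
  rw [interleave, Matrix.fromBlocks_zero]

lemma hatA_eq (B₁₁ B₁₂ : Matrix (Fin n) (Fin n) ℂ) (C₁₁ C₁₂ : Matrix (Fin p) (Fin p) ℂ) :
    hatA B₁₁ B₁₂ C₁₁ C₁₂ =
      Phi n p
        (Matrix.fromBlocks B₁₁ (B₁₂.map (starRingEnd ℂ)) (-B₁₂) (B₁₁.map (starRingEnd ℂ)))
        (Matrix.fromBlocks C₁₁ (C₁₂.map (starRingEnd ℂ)) (-C₁₂) (C₁₁.map (starRingEnd ℂ))) := by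
  unfold hatA Phi
  rw [interleave]

lemma omega_quad (P S : Matrix (Fin n) (Fin n) ℂ) (R T : Matrix (Fin p) (Fin p) ℂ) :
    omegaMap (Matrix.reindex finSumFinEquiv finSumFinEquiv (Matrix.fromBlocks P 0 0 R))
      (Matrix.reindex finSumFinEquiv finSumFinEquiv (Matrix.fromBlocks S 0 0 T)) =
    Matrix.reindex (quadEquiv n p) (quadEquiv n p)
      (Matrix.fromBlocks (Matrix.fromBlocks P 0 0 R)
        (Matrix.fromBlocks (S.map (starRingEnd ℂ)) 0 0 (T.map (starRingEnd ℂ)))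
        (Matrix.fromBlocks (-S) 0 0 (-T))
        (Matrix.fromBlocks (P.map (starRingEnd ℂ)) 0 0 (R.map (starRingEnd ℂ)))) := by
  unfold omegaMap
  have h1 : ((Matrix.reindex finSumFinEquiv finSumFinEquiv
        (Matrix.fromBlocks S 0 0 T)).map (starRingEnd ℂ)) =
      Matrix.reindex finSumFinEquiv finSumFinEquiv
        (Matrix.fromBlocks (S.map (starRingEnd ℂ)) 0 0 (T.map (starRingEnd ℂ))) := by
    ext i j
    rcases h : finSumFinEquiv.symm i with a | a <;> rcases h' : finSumFinEquiv.symm j with b | b <;>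
      simp [Matrix.reindex_apply, Matrix.fromBlocks, h, h']
  have h2 : (-(Matrix.reindex finSumFinEquiv finSumFinEquiv (Matrix.fromBlocks S 0 0 T))) =
      Matrix.reindex finSumFinEquiv finSumFinEquiv (Matrix.fromBlocks (-S) 0 0 (-T)) := by
    ext i j
    rcases h : finSumFinEquiv.symm i with a | a <;> rcases h' : finSumFinEquiv.symm j with b | b <;>
      simp [Matrix.reindex_apply, Matrix.fromBlocks, h, h']
  have h3 : ((Matrix.reindex finSumFinEquiv finSumFinEquiv
        (Matrix.fromBlocks P 0 0 R)).map (starRingEnd ℂ)) =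
      Matrix.reindex finSumFinEquiv finSumFinEquiv
        (Matrix.fromBlocks (P.map (starRingEnd ℂ)) 0 0 (R.map (starRingEnd ℂ))) := by
    ext i j
    rcases h : finSumFinEquiv.symm i with a | a <;> rcases h' : finSumFinEquiv.symm j with b | b <;>
      simp [Matrix.reindex_apply, Matrix.fromBlocks, h, h']
  rw [h1, h2, h3, quad_reindex]

end BPBR

/-- **Lemma 2.6 (block-per-block roots).** Given `H₁`-selfadjoint `m`th root
`A₁ = [[B₁₁, conj B₁₂], [−B₁₂, conj B₁₁]] ∈ Ω_{2n}` of `B₁ = J₁ ⊕ conj J₁` and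
`H₂`-selfadjoint `m`th root `A₂ = [[C₁₁, conj C₁₂], [−C₁₂, conj C₁₁]] ∈ Ω_{2p}` of
`B₂ = J₂ ⊕ conj J₂`, the matrix `Â` is an `Ĥ`-selfadjoint `m`th root of `B̂`, all in
`Ω_{2(n+p)}`, where `B̂ = J₁ ⊕ J₂ ⊕ conj J₁ ⊕ conj J₂`, `Ĥ = Q₁ ⊕ Q₂ ⊕ conj Q₁ ⊕ conj Q₂`. -/
theorem block_per_block_root {n p : ℕ} (m : ℕ) (hm : 0 < m)
    (Q₁ J₁ B₁₁ B₁₂ : Matrix (Fin n) (Fin n) ℂ) (Q₂ J₂ C₁₁ C₁₂ : Matrix (Fin p) (Fin p) ℂ)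
    (hH₁u : IsUnit (pairConj Q₁)) (hH₁herm : (pairConj Q₁).IsHermitian)
    (hB₁sa : pairConj Q₁ * pairConj J₁ = (pairConj J₁)ᴴ * pairConj Q₁)
    (hH₂u : IsUnit (pairConj Q₂)) (hH₂herm : (pairConj Q₂).IsHermitian)
    (hB₂sa : pairConj Q₂ * pairConj J₂ = (pairConj J₂)ᴴ * pairConj Q₂)
    (hA₁sa : pairConj Q₁ * omegaMap B₁₁ B₁₂ = (omegaMap B₁₁ B₁₂)ᴴ * pairConj Q₁)
    (hA₁root : (omegaMap B₁₁ B₁₂) ^ m = pairConj J₁)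
    (hA₂sa : pairConj Q₂ * omegaMap C₁₁ C₁₂ = (omegaMap C₁₁ C₁₂)ᴴ * pairConj Q₂)
    (hA₂root : (omegaMap C₁₁ C₁₂) ^ m = pairConj J₂) :
    InOmega (n := n + p) (ddiag4 J₁ J₂ (J₁.map (starRingEnd ℂ)) (J₂.map (starRingEnd ℂ))) ∧
    InOmega (n := n + p) (hatA B₁₁ B₁₂ C₁₁ C₁₂) ∧
    ddiag4 Q₁ Q₂ (Q₁.map (starRingEnd ℂ)) (Q₂.map (starRingEnd ℂ)) *
        ddiag4 J₁ J₂ (J₁.map (starRingEnd ℂ)) (J₂.map (starRingEnd ℂ)) =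
      (ddiag4 J₁ J₂ (J₁.map (starRingEnd ℂ)) (J₂.map (starRingEnd ℂ)))ᴴ *
        ddiag4 Q₁ Q₂ (Q₁.map (starRingEnd ℂ)) (Q₂.map (starRingEnd ℂ)) ∧
    ddiag4 Q₁ Q₂ (Q₁.map (starRingEnd ℂ)) (Q₂.map (starRingEnd ℂ)) *
        hatA B₁₁ B₁₂ C₁₁ C₁₂ =
      (hatA B₁₁ B₁₂ C₁₁ C₁₂)ᴴ *
        ddiag4 Q₁ Q₂ (Q₁.map (starRingEnd ℂ)) (Q₂.map (starRingEnd ℂ)) ∧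
    (hatA B₁₁ B₁₂ C₁₁ C₁₂) ^ m =
      ddiag4 J₁ J₂ (J₁.map (starRingEnd ℂ)) (J₂.map (starRingEnd ℂ)) := by
  classical
  set XB := Matrix.fromBlocks B₁₁ (B₁₂.map (starRingEnd ℂ)) (-B₁₂) (B₁₁.map (starRingEnd ℂ))
    with hXB
  set XC := Matrix.fromBlocks C₁₁ (C₁₂.map (starRingEnd ℂ)) (-C₁₂) (C₁₁.map (starRingEnd ℂ))
    with hXC
  set DQ₁ := Matrix.fromBlocks Q₁ 0 0 (Q₁.map (starRingEnd ℂ)) with hDQ₁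
  set DQ₂ := Matrix.fromBlocks Q₂ 0 0 (Q₂.map (starRingEnd ℂ)) with hDQ₂
  set DJ₁ := Matrix.fromBlocks J₁ 0 0 (J₁.map (starRingEnd ℂ)) with hDJ₁
  set DJ₂ := Matrix.fromBlocks J₂ 0 0 (J₂.map (starRingEnd ℂ)) with hDJ₂
  have hpc : ∀ {k : ℕ} (M : Matrix (Fin k) (Fin k) ℂ),
      pairConj M = Matrix.reindex (finTwoMul k) (finTwoMul k)
        (Matrix.fromBlocks M 0 0 (M.map (starRingEnd ℂ))) := fun _ => rfl
  have hom : ∀ {k : ℕ} (A₁ A₂ : Matrix (Fin k) (Fin k) ℂ),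
      omegaMap A₁ A₂ = Matrix.reindex (finTwoMul k) (finTwoMul k)
        (Matrix.fromBlocks A₁ (A₂.map (starRingEnd ℂ)) (-A₂) (A₁.map (starRingEnd ℂ))) :=
    fun _ _ => rfl
  have eB : DQ₁ * XB = XBᴴ * DQ₁ := by
    apply BPBR.reindex_inj (finTwoMul n)
    rw [← BPBR.reindex_mul, ← BPBR.reindex_mul, ← BPBR.reindex_conjT]
    rw [hpc Q₁, hom B₁₁ B₁₂] at hA₁sa
    exact hA₁sa
  have eC : DQ₂ * XC = XCᴴ * DQ₂ := by
    apply BPBR.reindex_inj (finTwoMul p)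
    rw [← BPBR.reindex_mul, ← BPBR.reindex_mul, ← BPBR.reindex_conjT]
    rw [hpc Q₂, hom C₁₁ C₁₂] at hA₂sa
    exact hA₂sa
  have eJ₁ : DQ₁ * DJ₁ = DJ₁ᴴ * DQ₁ := by
    apply BPBR.reindex_inj (finTwoMul n)
    rw [← BPBR.reindex_mul, ← BPBR.reindex_mul, ← BPBR.reindex_conjT]
    rw [hpc Q₁, hpc J₁] at hB₁sa
    exact hB₁sa
  have eJ₂ : DQ₂ * DJ₂ = DJ₂ᴴ * DQ₂ := by
    apply BPBR.reindex_inj (finTwoMul p)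
    rw [← BPBR.reindex_mul, ← BPBR.reindex_mul, ← BPBR.reindex_conjT]
    rw [hpc Q₂, hpc J₂] at hB₂sa
    exact hB₂sa
  have rB : XB ^ m = DJ₁ := by
    apply BPBR.reindex_inj (finTwoMul n)
    rw [← BPBR.reindex_pow _ _ m hm]
    rw [hpc J₁, hom B₁₁ B₁₂] at hA₁root
    exact hA₁root
  have rC : XC ^ m = DJ₂ := by
    apply BPBR.reindex_inj (finTwoMul p)
    rw [← BPBR.reindex_pow _ _ m hm]
    rw [hpc J₂, hom C₁₁ C₁₂] at hA₂root
    exact hA₂root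
  refine ⟨?_, ?_, ?_, ?_, ?_⟩
  · refine ⟨Matrix.reindex finSumFinEquiv finSumFinEquiv (Matrix.fromBlocks J₁ 0 0 J₂), 0, ?_⟩
    have h0 : (0 : Matrix (Fin (n + p)) (Fin (n + p)) ℂ) =
        Matrix.reindex finSumFinEquiv finSumFinEquiv
          (Matrix.fromBlocks (0 : Matrix (Fin n) (Fin n) ℂ) 0 0
            (0 : Matrix (Fin p) (Fin p) ℂ)) := by
      simp
    rw [h0, BPBR.omega_quad]
    simp [ddiag4]
  · exact ⟨Matrix.reindex finSumFinEquiv finSumFinEquiv (Matrix.fromBlocks B₁₁ 0 0 C₁₁),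
      Matrix.reindex finSumFinEquiv finSumFinEquiv (Matrix.fromBlocks B₁₂ 0 0 C₁₂),
      by rw [BPBR.omega_quad]; rfl⟩
  · rw [BPBR.ddiag4_eq, BPBR.ddiag4_eq, ← hDQ₁, ← hDQ₂, ← hDJ₁, ← hDJ₂,
      BPBR.Phi_mul, BPBR.Phi_conjT, BPBR.Phi_mul, eJ₁, eJ₂]
  · rw [BPBR.ddiag4_eq, BPBR.hatA_eq, ← hDQ₁, ← hDQ₂, ← hXB, ← hXC,
      BPBR.Phi_mul, BPBR.Phi_conjT, BPBR.Phi_mul, eB, eC]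
  · rw [BPBR.hatA_eq, BPBR.ddiag4_eq, ← hXB, ← hXC, ← hDJ₁, ← hDJ₂,
      BPBR.Phi_pow _ _ m hm, rB, rC]


end
end

section
/- Let H̃ ∈ Ω_{2n} be an invertible Hermitian complex matrix and B̃ ∈ Ω_{2n} an H̃-selfadjoint matrix whose spectrum (as a 2n×2n complex matrix) consists only of positive real numbers. Then for every positive integer m there exists an H̃-selfadjoint matrix Ã ∈ Ω_{2n} with Ã^m = B̃. -/
open Matrix

noncomputable section

section
open Polynomial

lemma binom_aux {R : Type*} [CommRing R] (x h : R) :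
    ∀ k : ℕ, ∃ c : R, (x + h)^(k+1) = x^(k+1) + ((k+1 : ℕ) : R) * x^k * h + h^2 * c := by
  intro k
  induction k with
  | zero => exact ⟨0, by ring⟩
  | succ k ih =>
    obtain ⟨c, hc⟩ := ih
    refine ⟨((k+1 : ℕ) : R) * x^k + c * (x + h), ?_⟩
    have h2 : (x+h)^(k+2) = (x+h)^(k+1) * (x+h) := by ring
    rw [h2, hc]
    push_cast
    ring

lemma hensel_aux {R : Type*} [CommRing R] (m : ℕ) (hm : 0 < m) (hmu : IsUnit (m : R)) (b : R) :
    ∀ (K : ℕ) (x : R), IsUnit x → (x^m - b)^(2^K) = 0 → ∃ y : R, y^m = b := by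
  obtain ⟨k, rfl⟩ : ∃ k, m = k + 1 := ⟨m-1, (Nat.succ_pred_eq_of_pos hm).symm⟩
  intro K
  induction K with
  | zero => intro x _ hx; exact ⟨x, by simpa [sub_eq_zero] using hx⟩
  | succ K ih =>
    intro x hxu he
    set e := x^(k+1) - b with hedef
    have hne : IsNilpotent e := ⟨2^(K+1), he⟩
    have hMu : IsUnit (((k+1:ℕ) : R) * x^k) := hmu.mul (hxu.pow k)
    obtain ⟨M, hM⟩ := hMu
    set h := -(↑M⁻¹ * e) with hh
    obtain ⟨c, hc⟩ := binom_aux x h k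
    have key : ((k+1:ℕ):R) * x^k * h = -e := by
      rw [hh, ← hM, mul_neg, ← mul_assoc, Units.mul_inv, one_mul]
    have hxh : (x+h)^(k+1) - b = e^2 * ((↑M⁻¹)^2 * c) := by
      rw [hc, key, hh, hedef]; ring
    have he' : ((x+h)^(k+1) - b)^(2^K) = 0 := by
      rw [hxh, mul_pow, ← pow_mul]
      have h2 : 2 * 2^K = 2^(K+1) := by rw [pow_succ]; ring
      rw [h2, he, zero_mul]
    have hhn : IsNilpotent h := by
      exact ((Commute.all _ _).isNilpotent_mul_left hne).neg
    exact ih (x + h) (hhn.isUnit_add_left_of_commute hxu (Commute.all _ _)) he'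

lemma prod_dvd_pow_card {α : Type*} [CommMonoid α] (G : α) (s : Multiset α)
    (h : ∀ x ∈ s, x ∣ G) : s.prod ∣ G ^ Multiset.card s := by
  induction s using Multiset.induction_on with
  | empty => simp
  | cons a t ih =>
    rw [Multiset.prod_cons, Multiset.card_cons, pow_succ']
    exact mul_dvd_mul (h a (Multiset.mem_cons_self a t))
      (ih fun x hx => h x (Multiset.mem_cons_of_mem hx))

variable {n : ℕ}

lemma omegaMap_one : omegaMap (1 : Matrix (Fin n) (Fin n) ℂ) 0 = 1 := by
  simp only [omegaMap]
  have h1 : (1 : Matrix (Fin n) (Fin n) ℂ).map (starRingEnd ℂ) = 1 := by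
    ext i j; by_cases h : i = j <;> simp [Matrix.one_apply, h]
  rw [h1]
  simp [Matrix.fromBlocks_one]

lemma omegaMap_mul (A₁ A₂ B₁ B₂ : Matrix (Fin n) (Fin n) ℂ) :
    omegaMap A₁ A₂ * omegaMap B₁ B₂ =
      omegaMap (A₁ * B₁ - A₂.map (starRingEnd ℂ) * B₂)
        (A₂ * B₁ + A₁.map (starRingEnd ℂ) * B₂) := by
  simp only [omegaMap, Matrix.reindex_apply, Matrix.submatrix_mul_equiv,
    Matrix.fromBlocks_multiply]
  suffices h :
      Matrix.fromBlocks (A₁ * B₁ + A₂.map (starRingEnd ℂ) * (-B₂))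
        (A₁ * B₂.map (starRingEnd ℂ) + A₂.map (starRingEnd ℂ) * (B₁.map (starRingEnd ℂ)))
        ((-A₂) * B₁ + A₁.map (starRingEnd ℂ) * (-B₂))
        ((-A₂) * B₂.map (starRingEnd ℂ) + A₁.map (starRingEnd ℂ) * (B₁.map (starRingEnd ℂ))) =
      Matrix.fromBlocks (A₁ * B₁ - A₂.map (starRingEnd ℂ) * B₂)
        ((A₂ * B₁ + A₁.map (starRingEnd ℂ) * B₂).map (starRingEnd ℂ))
        (-(A₂ * B₁ + A₁.map (starRingEnd ℂ) * B₂))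
        ((A₁ * B₁ - A₂.map (starRingEnd ℂ) * B₂).map (starRingEnd ℂ)) by rw [h]
  ext (i'|i') (j'|j') <;>
    simp [Matrix.mul_apply, Matrix.add_apply, Matrix.sub_apply, Matrix.neg_apply,
      Matrix.map_apply, map_sum, Finset.sum_add_distrib, sub_eq_add_neg,
      Finset.sum_neg_distrib] <;> ring

lemma omegaMap_add (A₁ A₂ B₁ B₂ : Matrix (Fin n) (Fin n) ℂ) :
    omegaMap A₁ A₂ + omegaMap B₁ B₂ = omegaMap (A₁ + B₁) (A₂ + B₂) := by
  simp only [omegaMap, Matrix.reindex_apply]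
  ext i j
  rcases h1 : (finTwoMul n).symm i with i' | i' <;> rcases h2 : (finTwoMul n).symm j with j' | j' <;>
    simp [h1, h2, Matrix.add_apply, Matrix.map_apply, Matrix.neg_apply] <;> ring

lemma omegaMap_smul (r : ℝ) (A₁ A₂ : Matrix (Fin n) (Fin n) ℂ) :
    (r : ℂ) • omegaMap A₁ A₂ = omegaMap ((r:ℂ) • A₁) ((r:ℂ) • A₂) := by
  simp only [omegaMap, Matrix.reindex_apply]
  ext i j
  rcases h1 : (finTwoMul n).symm i with i' | i' <;> rcases h2 : (finTwoMul n).symm j with j' | j' <;>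
    simp [h1, h2, Matrix.smul_apply, Matrix.map_apply, Matrix.neg_apply, Complex.conj_ofReal]

lemma inOmega_one : InOmega (1 : Matrix (Fin (2*n)) (Fin (2*n)) ℂ) := ⟨1, 0, omegaMap_one.symm⟩

lemma InOmega.add {M N : Matrix (Fin (2*n)) (Fin (2*n)) ℂ} (hM : InOmega M) (hN : InOmega N) :
    InOmega (M + N) := by
  obtain ⟨A₁, A₂, rfl⟩ := hM; obtain ⟨B₁, B₂, rfl⟩ := hN
  exact ⟨_, _, omegaMap_add A₁ A₂ B₁ B₂⟩

lemma InOmega.mul {M N : Matrix (Fin (2*n)) (Fin (2*n)) ℂ} (hM : InOmega M) (hN : InOmega N) :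
    InOmega (M * N) := by
  obtain ⟨A₁, A₂, rfl⟩ := hM; obtain ⟨B₁, B₂, rfl⟩ := hN
  exact ⟨_, _, omegaMap_mul A₁ A₂ B₁ B₂⟩

lemma InOmega.smul_real (r : ℝ) {M : Matrix (Fin (2*n)) (Fin (2*n)) ℂ} (hM : InOmega M) :
    InOmega ((r : ℂ) • M) := by
  obtain ⟨A₁, A₂, rfl⟩ := hM
  exact ⟨_, _, omegaMap_smul r A₁ A₂⟩

lemma InOmega.pow {M : Matrix (Fin (2*n)) (Fin (2*n)) ℂ} (hM : InOmega M) (k : ℕ) :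
    InOmega (M ^ k) := by
  induction k with
  | zero => simpa using inOmega_one
  | succ k ih => rw [pow_succ]; exact ih.mul hM

lemma InOmega.aeval {B : Matrix (Fin (2*n)) (Fin (2*n)) ℂ} (hB : InOmega B) (P : Polynomial ℝ) :
    InOmega (Polynomial.aeval B P) := by
  induction P using Polynomial.induction_on' with
  | add p q hp hq => rw [map_add]; exact hp.add hq
  | monomial k r =>
    have : Polynomial.aeval B (Polynomial.monomial k r) = (r : ℂ) • B ^ k := by
      rw [Polynomial.aeval_monomial,
        IsScalarTower.algebraMap_apply ℝ ℂ (Matrix (Fin (2*n)) (Fin (2*n)) ℂ),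
        Algebra.algebraMap_eq_smul_one]
      simp [smul_mul_assoc]
    rw [this]
    exact (hB.pow k).smul_real r

lemma sa_pow {H B : Matrix (Fin (2*n)) (Fin (2*n)) ℂ} (h : H * B = Bᴴ * H) (k : ℕ) :
    H * B ^ k = (B ^ k)ᴴ * H := by
  induction k with
  | zero => simp
  | succ k ih =>
    rw [pow_succ', conjTranspose_mul, ← mul_assoc, h, mul_assoc, ih, ← mul_assoc]
    rw [conjTranspose_pow]
    rw [← pow_succ, ← pow_succ']

lemma sa_aeval {H B : Matrix (Fin (2*n)) (Fin (2*n)) ℂ} (h : H * B = Bᴴ * H) (P : Polynomial ℝ) :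
    H * Polynomial.aeval B P = (Polynomial.aeval B P)ᴴ * H := by
  induction P using Polynomial.induction_on' with
  | add p q hp hq => rw [map_add, conjTranspose_add, mul_add, add_mul, hp, hq]
  | monomial k r =>
    have hmono : Polynomial.aeval B (Polynomial.monomial k r) = (r : ℂ) • B ^ k := by
      rw [Polynomial.aeval_monomial,
        IsScalarTower.algebraMap_apply ℝ ℂ (Matrix (Fin (2*n)) (Fin (2*n)) ℂ),
        Algebra.algebraMap_eq_smul_one]
      simp [smul_mul_assoc]
    rw [hmono, conjTranspose_smul, mul_smul_comm, smul_mul_assoc, sa_pow h k]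
    congr 1
    simp [Complex.conj_ofReal]

variable {N : ℕ}

lemma root_mem_spectrum (B : Matrix (Fin N) (Fin N) ℂ) (r : ℂ)
    (hr : B.charpoly.IsRoot r) : r ∈ spectrum ℂ B := by
  rw [spectrum.mem_iff, Matrix.isUnit_iff_isUnit_det]
  intro hu
  have heval : B.charpoly.eval r = (algebraMap ℂ (Matrix (Fin N) (Fin N) ℂ) r - B).det := by
    rw [Matrix.charpoly, _root_.eval_det, matPolyEquiv_charmatrix]
    congr 1
    simp only [eval_sub, eval_C, eval_X]
    congr 1
  rw [hr.eq_zero] at heval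
  rw [← heval] at hu
  exact hu.ne_zero rfl

lemma charpoly_real (B : Matrix (Fin N) (Fin N) ℂ)
    (hspec : ∀ μ ∈ spectrum ℂ B, μ.im = 0) :
    ∃ qr : Polynomial ℝ, qr.map (algebraMap ℝ ℂ) = B.charpoly := by
  have hmonic := B.charpoly_monic
  have hsplit : B.charpoly.Splits := IsAlgClosed.splits _
  have hprod := hsplit.eq_prod_roots_of_monic hmonic
  have hrootsreal : ∀ r ∈ B.charpoly.roots, r.im = 0 := by
    intro r hr
    exact hspec r (root_mem_spectrum B r (isRoot_of_mem_roots hr))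
  have hconj : B.charpoly.map (starRingEnd ℂ) = B.charpoly := by
    conv_lhs => rw [hprod]
    conv_rhs => rw [hprod]
    rw [Polynomial.map_multiset_prod, Multiset.map_map]
    congr 1
    apply Multiset.map_congr rfl
    intro r hr
    simp only [Function.comp_apply, Polynomial.map_sub, map_X, map_C]
    congr 2
    exact Complex.conj_eq_iff_im.mpr (hrootsreal r hr)
  rw [← mem_lifts]
  rw [lifts_iff_coeff_lifts]
  intro k
  have : (starRingEnd ℂ) (B.charpoly.coeff k) = B.charpoly.coeff k := by
    conv_rhs => rw [← hconj]
    rw [coeff_map]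
  refine ⟨(B.charpoly.coeff k).re, ?_⟩
  have him : (B.charpoly.coeff k).im = 0 := by
    have := congrArg Complex.im this
    simp [Complex.conj_im] at this
    linarith [this]
  apply Complex.ext
  · simp
  · simp [him]

lemma exists_poly_root {n : ℕ} (m : ℕ) (hm : 0 < m)
    (B : Matrix (Fin (2 * n)) (Fin (2 * n)) ℂ)
    (hspec : ∀ μ ∈ spectrum ℂ B, μ.im = 0 ∧ 0 < μ.re)
    (qr : Polynomial ℝ) (hqr : qr.map (algebraMap ℝ ℂ) = B.charpoly) :
    ∃ P : Polynomial ℝ, (Polynomial.aeval B P) ^ m = B := by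
  classical
  have hq_monic := B.charpoly_monic
  have hq_splits : B.charpoly.Splits := IsAlgClosed.splits _
  have hroot_spec : ∀ r ∈ B.charpoly.roots, r ∈ spectrum ℂ B := fun r hr =>
    root_mem_spectrum B r (isRoot_of_mem_roots hr)
  set T : Finset ℝ := (B.charpoly.roots.map Complex.re).toFinset with hT
  set p₀ : Polynomial ℝ := Lagrange.interpolate T id (fun x => x ^ ((m:ℝ)⁻¹)) with hp₀
  set g : Polynomial ℝ := p₀ ^ m - X with hg
  have hGvanish : ∀ r ∈ B.charpoly.roots, Polynomial.aeval r g = (0:ℂ) := by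
    intro r hr
    obtain ⟨him, hre⟩ := hspec r (hroot_spec r hr)
    have hrre : (algebraMap ℝ ℂ) r.re = r := by
      apply Complex.ext <;> simp [him]
    have hmem : r.re ∈ T := by
      rw [hT, Multiset.mem_toFinset]
      exact Multiset.mem_map.mpr ⟨r, hr, rfl⟩
    have heval : Polynomial.eval r.re p₀ = r.re ^ ((m:ℝ)⁻¹) := by
      simpa [hp₀] using Lagrange.eval_interpolate_at_node (fun x => x ^ ((m:ℝ)⁻¹))
        (Set.injOn_id _) hmem
    have hpow : (r.re ^ ((m:ℝ)⁻¹)) ^ m = r.re := by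
      rw [← Real.rpow_natCast (r.re ^ ((m:ℝ)⁻¹)) m, ← Real.rpow_mul hre.le,
        inv_mul_cancel₀ (by exact_mod_cast hm.ne' : (m:ℝ) ≠ 0), Real.rpow_one]
    have key : Polynomial.aeval r g = (algebraMap ℝ ℂ) (Polynomial.eval r.re g) := by
      conv_lhs => rw [← hrre]
      exact aeval_algebraMap_apply_eq_algebraMap_eval _ _
    rw [key, hg]
    simp [heval, hpow]
  have hcard : Multiset.card B.charpoly.roots = 2*n := by
    rw [splits_iff_card_roots.mp hq_splits, Matrix.charpoly_natDegree_eq_dim, Fintype.card_fin]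
  have hdvd : qr ∣ g ^ (2*n) := by
    rw [← map_dvd_map' (algebraMap ℝ ℂ), hqr, Polynomial.map_pow]
    conv_lhs => rw [hq_splits.eq_prod_roots_of_monic hq_monic]
    have h := prod_dvd_pow_card (g.map (algebraMap ℝ ℂ))
      (B.charpoly.roots.map (fun a => X - C a)) ?_
    · rwa [Multiset.card_map, hcard] at h
    · intro x hx
      obtain ⟨r, hr, rfl⟩ := Multiset.mem_map.mp hx
      refine dvd_iff_isRoot.mpr ?_
      rw [IsRoot, eval_map, ← aeval_def]
      exact hGvanish r hr
  -- quotient ring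
  set I : Ideal (Polynomial ℝ) := Ideal.span {qr} with hI
  let π : Polynomial ℝ →+* (Polynomial ℝ ⧸ I) := Ideal.Quotient.mk I
  have hπC : ∀ c : ℝ, π (C c) = algebraMap ℝ (Polynomial ℝ ⧸ I) c := by
    intro c
    rw [IsScalarTower.algebraMap_apply ℝ (Polynomial ℝ) (Polynomial ℝ ⧸ I),
      Polynomial.algebraMap_eq, Ideal.Quotient.algebraMap_eq]
  have hmu : IsUnit ((m:ℕ) : Polynomial ℝ ⧸ I) := by
    have h1 : ((m:ℕ) : Polynomial ℝ ⧸ I) = algebraMap ℝ _ (m:ℝ) := by rw [map_natCast]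
    rw [h1]
    exact (isUnit_iff_ne_zero.mpr (by exact_mod_cast hm.ne')).map _
  have hc0 : B.charpoly.coeff 0 ≠ 0 := by
    intro h0
    have hroot : (0:ℂ) ∈ B.charpoly.roots := by
      rw [mem_roots hq_monic.ne_zero, IsRoot, ← coeff_zero_eq_eval_zero]
      exact h0
    have := (hspec 0 (hroot_spec 0 hroot)).2
    simp at this
  have hqr0 : qr.coeff 0 ≠ 0 := by
    intro h
    apply hc0
    rw [← hqr, coeff_map, h, map_zero]
  have hqrzero : π qr = 0 := Ideal.Quotient.eq_zero_iff_mem.mpr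
    (Ideal.subset_span (Set.mem_singleton _))
  have hbu : IsUnit (π X) := by
    have hmul : π X * π qr.divX = algebraMap ℝ _ (- qr.coeff 0) := by
      rw [← _root_.map_mul π]
      have h2 : X * qr.divX = qr - C (qr.coeff 0) := by
        rw [eq_sub_iff_add_eq, X_mul_divX_add]
      rw [h2, map_sub, hqrzero, zero_sub, map_neg, hπC, ← map_neg]
    exact isUnit_of_mul_isUnit_left
      (hmul ▸ ((isUnit_iff_ne_zero.mpr (neg_ne_zero.mpr hqr0)).map (algebraMap ℝ (Polynomial ℝ ⧸ I))))
  have hK : (π p₀ ^ m - π X) ^ (2 ^ (2*n)) = 0 := by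
    rw [← map_pow, ← map_sub, ← map_pow, Ideal.Quotient.eq_zero_iff_mem, hI,
      Ideal.mem_span_singleton]
    exact dvd_trans hdvd (pow_dvd_pow g (le_of_lt (Nat.lt_two_pow_self)))
  have hx₀u : IsUnit (π p₀) := by
    have he : IsNilpotent (π p₀ ^ m - π X) := ⟨2^(2*n), hK⟩
    have hup : IsUnit (π p₀ ^ m) := by
      have h1 : π p₀ ^ m = (π p₀ ^ m - π X) + π X := by ring
      rw [h1]
      exact he.isUnit_add_right_of_commute hbu (Commute.all _ _)
    obtain ⟨k, hk⟩ : ∃ k, m = k + 1 := ⟨m-1, (Nat.succ_pred_eq_of_pos hm).symm⟩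
    rw [hk, pow_succ] at hup
    exact isUnit_of_mul_isUnit_right hup
  obtain ⟨y, hy⟩ := hensel_aux m hm hmu (π X) (2*n) (π p₀) hx₀u hK
  obtain ⟨P, rfl⟩ := Ideal.Quotient.mk_surjective y
  have hdvd2 : qr ∣ P ^ m - X := by
    rw [← Ideal.mem_span_singleton, ← hI, ← Ideal.Quotient.eq_zero_iff_mem, map_sub, map_pow]
    exact sub_eq_zero.mpr hy
  obtain ⟨t, ht⟩ := hdvd2
  refine ⟨P, ?_⟩
  have hzero : Polynomial.aeval B (P ^ m - X) = 0 := by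
    rw [ht, _root_.map_mul]
    have hqz : Polynomial.aeval B qr = 0 := by
      rw [← Polynomial.aeval_map_algebraMap ℂ, hqr, Matrix.aeval_self_charpoly]
    rw [hqz, zero_mul]
  rw [map_sub, map_pow, aeval_X, sub_eq_zero] at hzero
  exact hzero

end

/-- **Theorem 3.3.** An `H̃`-selfadjoint matrix in `Ω_{2n}` whose spectrum consists only of
positive real numbers has an `H̃`-selfadjoint `m`th root in `Ω_{2n}`. -/
theorem exists_root_positive_spectrum {n : ℕ} (m : ℕ) (hm : 0 < m)
    (H B : Matrix (Fin (2 * n)) (Fin (2 * n)) ℂ)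
    (hHΩ : InOmega H) (hHu : IsUnit H) (hHherm : H.IsHermitian)
    (hBΩ : InOmega B) (hBsa : H * B = Bᴴ * H)
    (hspec : ∀ μ ∈ spectrum ℂ B, μ.im = 0 ∧ 0 < μ.re) :
    ∃ A : Matrix (Fin (2 * n)) (Fin (2 * n)) ℂ,
      InOmega A ∧ H * A = Aᴴ * H ∧ A ^ m = B := by
  obtain ⟨qr, hqr⟩ := charpoly_real B (fun μ h => (hspec μ h).1)
  obtain ⟨P, hP⟩ := exists_poly_root m hm B hspec qr hqr
  exact ⟨Polynomial.aeval B P, hBΩ.aeval P, sa_aeval hBsa P, hP⟩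

end
end
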